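/- Let (X, m) be a σ-finite measure space, {T_t : t > 0} a family of operators, 1 ≤ p < ∞, γ ≠ 0, and set L = ∞ if γ > 0 and L = 0 if γ < 0. Suppose g(x) = lim_{t→0+} T_t f(x) exists and is finite m-a.e., and T*f = sup_{t>0}|T_t f| ∈ L^p(X,m). Then lim_{λ→L} λ^p ∬_{{(x,t) : t^{−γ/p}|T_t f(x)| > λ}} t^{γ−1} dt dm(x) = (1/|γ|) ‖g‖_{L^p(X,m)}^p. -/

import Mathlib

open MeasureTheory Filter Set
open scoped ENNReal

noncomputable section

/-- The measure on `(0,∞)` with density `t^(γ-1)`. -/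
def wGamma (γ : ℝ) : Measure ℝ :=
  (volume.restrict (Set.Ioi (0 : ℝ))).withDensity fun t => ENNReal.ofReal (t ^ (γ - 1))

/-- The maximal function `T* f (x) = sup_{t>0} |T_t f (x)|`. -/
def TstarFn {X : Type*} (T : ℝ → X → ℝ) (x : X) : ℝ≥0∞ :=
  ⨆ (t : ℝ) (_ : 0 < t), ENNReal.ofReal |T t x|

lemma wGamma_apply {γ : ℝ} {S : Set ℝ} (hS : MeasurableSet S) :
    wGamma γ S = ∫⁻ t in S ∩ Ioi 0, ENNReal.ofReal (t ^ (γ - 1)) := by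
  rw [wGamma, withDensity_apply _ hS, Measure.restrict_restrict hS]

lemma wGamma_singleton (γ a : ℝ) : wGamma γ {a} = 0 := by
  rw [wGamma_apply (measurableSet_singleton a)]
  exact setLIntegral_measure_zero _ _
    (measure_mono_null inter_subset_left (Real.volume_singleton))

lemma wGamma_Ioo {γ : ℝ} (hγ : 0 < γ) {B : ℝ} (hB : 0 ≤ B) :
    wGamma γ (Ioo 0 B) = ENNReal.ofReal (B ^ γ / γ) := by
  rw [wGamma_apply measurableSet_Ioo]
  rw [show Ioo (0:ℝ) B ∩ Ioi 0 = Ioo 0 B from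
    inter_eq_self_of_subset_left Ioo_subset_Ioi_self]
  have hint : IntegrableOn (fun t : ℝ => t ^ (γ - 1)) (Ioo 0 B) := by
    have h := intervalIntegral.intervalIntegrable_rpow' (a := 0) (b := B)
      (r := γ - 1) (by linarith)
    rwa [intervalIntegrable_iff_integrableOn_Ioo_of_le hB] at h
  have hnn : 0 ≤ᵐ[volume.restrict (Ioo 0 B)] fun t : ℝ => t ^ (γ - 1) :=
    (ae_restrict_iff' measurableSet_Ioo).mpr
      (ae_of_all _ fun t ht => Real.rpow_nonneg ht.1.le _)
  rw [← ofReal_integral_eq_lintegral_ofReal hint hnn]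
  congr 1
  rw [← integral_Ioc_eq_integral_Ioo, ← intervalIntegral.integral_of_le hB,
    integral_rpow (Or.inl (by linarith))]
  rw [Real.zero_rpow (by linarith : γ - 1 + 1 ≠ 0), sub_add_cancel, sub_zero]

lemma wGamma_Ioi {γ : ℝ} (hγ : γ < 0) {A : ℝ} (hA : 0 < A) :
    wGamma γ (Ioi A) = ENNReal.ofReal (A ^ γ / (-γ)) := by
  rw [wGamma_apply measurableSet_Ioi,
    inter_eq_self_of_subset_left (Ioi_subset_Ioi hA.le)]
  have hint : IntegrableOn (fun t : ℝ => t ^ (γ - 1)) (Ioi A) :=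
    integrableOn_Ioi_rpow_of_lt (by linarith) hA
  have hnn : 0 ≤ᵐ[volume.restrict (Ioi A)] fun t : ℝ => t ^ (γ - 1) :=
    (ae_restrict_iff' measurableSet_Ioi).mpr
      (ae_of_all _ fun t ht => Real.rpow_nonneg (hA.trans ht).le _)
  rw [← ofReal_integral_eq_lintegral_ofReal hint hnn]
  congr 1
  rw [integral_Ioi_rpow_of_lt (by linarith) hA, sub_add_cancel]
  rw [neg_div, div_neg]

lemma wGamma_ball {p γ : ℝ} (hp : 0 < p) (hγ : γ ≠ 0) {b : ℝ} (hb : 0 ≤ b) :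
    wGamma γ {s : ℝ | 0 < s ∧ s ^ (γ / p) < b} = ENNReal.ofReal (b ^ p / |γ|) := by
  rcases eq_or_lt_of_le hb with hb0 | hb0
  · have hset : {s : ℝ | 0 < s ∧ s ^ (γ / p) < b} = ∅ := by
      ext s
      simp only [mem_setOf_eq, mem_empty_iff_false, iff_false, not_and, not_lt]
      intro hs
      rw [← hb0]
      exact Real.rpow_nonneg hs.le _
    rw [hset, measure_empty, ← hb0, Real.zero_rpow hp.ne', zero_div,
      ENNReal.ofReal_zero]
  · rcases lt_or_gt_of_ne hγ with hneg | hpos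
    · set A := b ^ (p / γ) with hA
      have hApos : 0 < A := Real.rpow_pos_of_pos hb0 _
      have hbA : b = A ^ (γ / p) := by
        rw [hA, ← Real.rpow_mul hb0.le]
        rw [show p / γ * (γ / p) = 1 by field_simp, Real.rpow_one]
      have hzp : γ / p < 0 := div_neg_of_neg_of_pos hneg hp
      have hset : {s : ℝ | 0 < s ∧ s ^ (γ / p) < b} = Ioi A := by
        ext s
        simp only [mem_setOf_eq, mem_Ioi]
        constructor
        · rintro ⟨hs, hlt⟩
          rw [hbA] at hlt
          exact (Real.rpow_lt_rpow_iff_of_neg hs hApos hzp).mp hlt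
        · intro hlt
          refine ⟨hApos.trans hlt, ?_⟩
          rw [hbA]
          exact (Real.rpow_lt_rpow_iff_of_neg (hApos.trans hlt) hApos hzp).mpr hlt
      rw [hset, wGamma_Ioi hneg hApos]
      congr 1
      rw [hA, ← Real.rpow_mul hb0.le, show p / γ * γ = p by field_simp,
        abs_of_neg hneg]
    · set B := b ^ (p / γ) with hB
      have hBpos : 0 < B := Real.rpow_pos_of_pos hb0 _
      have hbB : b = B ^ (γ / p) := by
        rw [hB, ← Real.rpow_mul hb0.le]
        rw [show p / γ * (γ / p) = 1 by field_simp, Real.rpow_one]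
      have hzp : 0 < γ / p := div_pos hpos hp
      have hset : {s : ℝ | 0 < s ∧ s ^ (γ / p) < b} = Ioo 0 B := by
        ext s
        simp only [mem_setOf_eq, mem_Ioo]
        constructor
        · rintro ⟨hs, hlt⟩
          rw [hbB] at hlt
          exact ⟨hs, (Real.rpow_lt_rpow_iff hs.le hBpos.le hzp).mp hlt⟩
        · rintro ⟨hs, hlt⟩
          refine ⟨hs, ?_⟩
          rw [hbB]
          exact (Real.rpow_lt_rpow_iff hs.le hBpos.le hzp).mpr hlt
      rw [hset, wGamma_Ioo hpos hBpos.le]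
      congr 1
      rw [hB, ← Real.rpow_mul hb0.le, show p / γ * γ = p by field_simp,
        abs_of_pos hpos]

lemma wGamma_scale {γ c : ℝ} (hc : 0 < c) {S : Set ℝ} (hS : MeasurableSet S) :
    wGamma γ S = ENNReal.ofReal (c ^ γ) * wGamma γ ((fun s => c * s) ⁻¹' S) := by
  set ψ : ℝ → ℝ≥0∞ := (S ∩ Ioi 0).indicator fun t => ENNReal.ofReal (t ^ (γ - 1))
    with hψ
  have hSm : MeasurableSet (S ∩ Ioi 0) := hS.inter measurableSet_Ioi
  have hψm : Measurable ψ :=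
    ((measurable_id.pow measurable_const).ennreal_ofReal).indicator hSm
  have hmap : ∫⁻ s, ψ (c * s) = ENNReal.ofReal |c⁻¹| * ∫⁻ t, ψ t := by
    rw [← lintegral_map hψm (measurable_const_mul c)]
    rw [show (fun s : ℝ => c * s) = (c * ·) from rfl, Real.map_volume_mul_left hc.ne',
      lintegral_smul_measure, smul_eq_mul]
  have key : ∫⁻ t, ψ t = ENNReal.ofReal c * ∫⁻ s, ψ (c * s) := by
    rw [hmap, ← mul_assoc, ← ENNReal.ofReal_mul hc.le,
      abs_of_pos (inv_pos.mpr hc), mul_inv_cancel₀ hc.ne', ENNReal.ofReal_one,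
      one_mul]
  have h2 : ∀ s : ℝ, ψ (c * s) =
      ((fun s => c * s) ⁻¹' S ∩ Ioi 0).indicator
        (fun s => ENNReal.ofReal (c ^ (γ - 1)) * ENNReal.ofReal (s ^ (γ - 1))) s := by
    intro s
    by_cases h : s ∈ (fun s => c * s) ⁻¹' S ∩ Ioi 0
    · have hs : (0 : ℝ) < s := h.2
      have hmem : c * s ∈ S ∩ Ioi 0 := ⟨h.1, mul_pos hc hs⟩
      rw [hψ, indicator_of_mem hmem, indicator_of_mem h,
        ← ENNReal.ofReal_mul (Real.rpow_nonneg hc.le _),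
        ← Real.mul_rpow hc.le hs.le]
    · have hmem : c * s ∉ S ∩ Ioi 0 := by
        intro hmem
        refine h ⟨hmem.1, ?_⟩
        have := hmem.2
        simp only [mem_Ioi] at this ⊢
        nlinarith
      rw [hψ, indicator_of_notMem hmem, indicator_of_notMem h]
  have hpre : MeasurableSet ((fun s => c * s) ⁻¹' S ∩ Ioi 0) :=
    (hS.preimage (measurable_const_mul c)).inter measurableSet_Ioi
  calc wGamma γ S = ∫⁻ t, ψ t := by
        rw [wGamma_apply hS, hψ, lintegral_indicator hSm]
    _ = ENNReal.ofReal c * ∫⁻ s, ψ (c * s) := key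
    _ = ENNReal.ofReal c * ∫⁻ s, ENNReal.ofReal (c ^ (γ - 1)) *
          (((fun s => c * s) ⁻¹' S ∩ Ioi 0).indicator
            (fun s => ENNReal.ofReal (s ^ (γ - 1))) s) := by
        congr 1
        refine lintegral_congr fun s => ?_
        rw [h2 s]
        by_cases h : s ∈ (fun s => c * s) ⁻¹' S ∩ Ioi 0
        · rw [indicator_of_mem h, indicator_of_mem h]
        · rw [indicator_of_notMem h, indicator_of_notMem h, mul_zero]
    _ = ENNReal.ofReal (c ^ γ) * wGamma γ ((fun s => c * s) ⁻¹' S) := by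
        rw [lintegral_const_mul' _ _ ENNReal.ofReal_ne_top, ← mul_assoc,
          ← ENNReal.ofReal_mul hc.le]
        congr 2
        · rw [show γ = 1 + (γ - 1) from by ring, Real.rpow_add hc, Real.rpow_one,
            show 1 + (γ - 1) - 1 = γ - 1 from by ring]
        · rw [wGamma_apply (hS.preimage (measurable_const_mul c)),
            ← lintegral_indicator hpre]

/-- Theorem (abstract exact limit formula with signed weight exponent): if
`g = lim_{t→0+} T_t f` exists a.e. and `T* f ∈ L^p`, then
`lim_{λ→L} λ^p ∬_{t^{−γ/p}|T_t f(x)|>λ} t^{γ−1} dt dm = (1/|γ|) ‖g‖_p^p`,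
where `L = ∞` if `γ > 0` and `L = 0` if `γ < 0`. -/
theorem abstract_exact_limit_signed_gamma
    {X : Type*} [MeasurableSpace X] (m : Measure X) [SigmaFinite m]
    (p γ : ℝ) (hp : 1 ≤ p) (hγ : γ ≠ 0)
    (T : ℝ → X → ℝ) (hT : Measurable fun q : X × ℝ => T q.2 q.1)
    (g : X → ℝ)
    (hlim : ∀ᵐ x ∂m, Tendsto (fun t => T t x) (nhdsWithin 0 (Set.Ioi 0)) (nhds (g x)))
    (hmax : ∫⁻ x, (TstarFn T x) ^ p ∂m ≠ ∞) :
    Tendsto (fun l : ℝ => ENNReal.ofReal (l ^ p) *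
        (m.prod (wGamma γ)) {q : X × ℝ | 0 < q.2 ∧ l * q.2 ^ (γ / p) < |T q.2 q.1|})
      (if 0 < γ then atTop else nhdsWithin 0 (Set.Ioi 0))
      (nhds (ENNReal.ofReal (1 / |γ|) * ∫⁻ x, ENNReal.ofReal (|g x| ^ p) ∂m)) := by
  have hp0 : 0 < p := lt_of_lt_of_le one_pos hp
  have hγabs : 0 < |γ| := abs_pos.mpr hγ
  -- measurable version of g
  have hseq : Tendsto (fun k : ℕ => (1 : ℝ) / (k + 1)) atTop (nhdsWithin 0 (Ioi 0)) := by
    apply tendsto_nhdsWithin_of_tendsto_nhds_of_eventually_within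
    · exact tendsto_one_div_add_atTop_nhds_zero_nat
    · exact Eventually.of_forall fun k => mem_Ioi.mpr (by positivity)
  have hg : AEMeasurable g m := by
    refine aemeasurable_of_tendsto_metrizable_ae atTop
      (f := fun (k : ℕ) x => T ((1 : ℝ) / (k + 1)) x)
      (fun k => (hT.comp (measurable_id.prodMk measurable_const)).aemeasurable) ?_
    exact hlim.mono fun x hx => hx.comp hseq
  set g' : X → ℝ := hg.mk g with hg'def
  have hg'meas : Measurable g' := hg.measurable_mk
  have hgg' : g =ᵐ[m] g' := hg.ae_eq_mk
  have hlim' : ∀ᵐ x ∂m, Tendsto (fun t => T t x) (nhdsWithin 0 (Ioi 0)) (nhds (g' x)) := by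
    filter_upwards [hlim, hgg'] with x h1 h2
    rwa [h2] at h1
  haveI : SFinite (wGamma γ) := by unfold wGamma; infer_instance
  set ν := wGamma γ with hν
  set I : ℝ≥0∞ := ENNReal.ofReal (1 / |γ|) * ∫⁻ x, ENNReal.ofReal (|g' x| ^ p) ∂m with hI
  have hIeq : ENNReal.ofReal (1 / |γ|) * ∫⁻ x, ENNReal.ofReal (|g x| ^ p) ∂m = I := by
    rw [hI]
    congr 1
    exact lintegral_congr_ae (hgg'.mono fun x hx => by dsimp only; rw [hx])
  rw [hIeq]
  -- the rescaled sets
  set Aset : ℝ → Set (X × ℝ) :=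
    fun c => {q : X × ℝ | 0 < q.2 ∧ q.2 ^ (γ / p) < |T (c * q.2) q.1|} with hAsetdef
  have hAset : ∀ c, MeasurableSet (Aset c) := by
    intro c
    apply MeasurableSet.inter
    · exact measurable_snd measurableSet_Ioi
    · exact measurableSet_lt (measurable_snd.pow measurable_const)
        ((hT.comp (measurable_fst.prodMk (measurable_snd.const_mul c))).abs)
  set Φ : ℝ → ℝ≥0∞ := fun c => ∫⁻ x, ν (Prod.mk x ⁻¹' Aset c) ∂m with hΦ
  have hfilter_pos : ∀ᶠ l in (if 0 < γ then atTop else nhdsWithin 0 (Set.Ioi 0) : Filter ℝ),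
      (0:ℝ) < l := by
    split_ifs with h
    · exact eventually_gt_atTop 0
    · exact eventually_mem_nhdsWithin
  -- Step B : change of variables
  have hkey : ∀ l : ℝ, 0 < l →
      ENNReal.ofReal (l ^ p) *
        (m.prod ν) {q : X × ℝ | 0 < q.2 ∧ l * q.2 ^ (γ / p) < |T q.2 q.1|}
      = Φ (l ^ (-(p / γ))) := by
    intro l hl
    set c := l ^ (-(p / γ)) with hcdef
    have hcpos : 0 < c := Real.rpow_pos_of_pos hl _
    have hE : MeasurableSet {q : X × ℝ | 0 < q.2 ∧ l * q.2 ^ (γ / p) < |T q.2 q.1|} := by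
      apply MeasurableSet.inter
      · exact measurable_snd measurableSet_Ioi
      · exact measurableSet_lt
          ((measurable_snd.pow measurable_const).const_mul l) (hT.abs)
    rw [Measure.prod_apply hE, ← lintegral_const_mul _
      (measurable_measure_prodMk_left hE)]
    refine lintegral_congr fun x => ?_
    have hSx : MeasurableSet {t : ℝ | 0 < t ∧ l * t ^ (γ / p) < |T t x|} := by
      apply MeasurableSet.inter
      · exact measurableSet_Ioi
      · exact measurableSet_lt
          ((measurable_id.pow measurable_const).const_mul l)
          ((hT.comp (measurable_const.prodMk measurable_id)).abs)
    have hcexp : c ^ (γ / p) = l⁻¹ := by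
      rw [hcdef, ← Real.rpow_mul hl.le,
        show -(p / γ) * (γ / p) = -1 by field_simp, Real.rpow_neg_one]
    have hpre : (fun s => c * s) ⁻¹' {t : ℝ | 0 < t ∧ l * t ^ (γ / p) < |T t x|}
        = {s : ℝ | 0 < s ∧ s ^ (γ / p) < |T (c * s) x|} := by
      ext s
      simp only [mem_preimage, mem_setOf_eq]
      constructor
      · rintro ⟨h1, h2⟩
        have hs : 0 < s := by nlinarith
        refine ⟨hs, ?_⟩
        rwa [Real.mul_rpow hcpos.le hs.le, hcexp, ← mul_assoc,
          mul_inv_cancel₀ hl.ne', one_mul] at h2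
      · rintro ⟨hs, h2⟩
        refine ⟨mul_pos hcpos hs, ?_⟩
        rwa [Real.mul_rpow hcpos.le hs.le, hcexp, ← mul_assoc,
          mul_inv_cancel₀ hl.ne', one_mul]
    have hslice : Prod.mk x ⁻¹' {q : X × ℝ | 0 < q.2 ∧ l * q.2 ^ (γ / p) < |T q.2 q.1|}
        = {t : ℝ | 0 < t ∧ l * t ^ (γ / p) < |T t x|} := rfl
    have hslice2 : Prod.mk x ⁻¹' Aset c = {s : ℝ | 0 < s ∧ s ^ (γ / p) < |T (c * s) x|} := rfl
    rw [hslice, hslice2, wGamma_scale (γ := γ) hcpos hSx, hpre, ← mul_assoc,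
      ← ENNReal.ofReal_mul (Real.rpow_nonneg hl.le _)]
    have hone : l ^ p * c ^ γ = 1 := by
      rw [hcdef, ← Real.rpow_mul hl.le, show -(p / γ) * γ = -p by field_simp,
        ← Real.rpow_add hl, add_neg_cancel, Real.rpow_zero]
    rw [hone, ENNReal.ofReal_one, one_mul]
  -- Step C : the reparametrization tends to 0⁺
  have hC : Tendsto (fun l : ℝ => l ^ (-(p / γ)))
      (if 0 < γ then atTop else nhdsWithin 0 (Set.Ioi 0)) (nhdsWithin 0 (Ioi 0)) := by
    split_ifs with h
    · apply tendsto_nhdsWithin_of_tendsto_nhds_of_eventually_within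
      · exact tendsto_rpow_neg_atTop (div_pos hp0 h)
      · filter_upwards [eventually_gt_atTop 0] with l hl
        exact Real.rpow_pos_of_pos hl _
    · have hγneg : γ < 0 := lt_of_le_of_ne (not_lt.mp h) hγ
      have he : 0 < -(p / γ) := neg_pos.mpr (div_neg_of_pos_of_neg hp0 hγneg)
      apply tendsto_nhdsWithin_of_tendsto_nhds_of_eventually_within
      · have hcont : ContinuousAt (fun l : ℝ => l ^ (-(p / γ))) 0 :=
          Real.continuousAt_rpow_const 0 _ (Or.inr he.le)
        have h0 : (0 : ℝ) ^ (-(p / γ)) = 0 := Real.zero_rpow he.ne'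
        have := hcont.tendsto
        rw [h0] at this
        exact this.mono_left nhdsWithin_le_nhds
      · filter_upwards [eventually_mem_nhdsWithin] with l hl
        exact Real.rpow_pos_of_pos hl _
  -- Step D : convergence of Φ at 0⁺
  have hD : Tendsto Φ (nhdsWithin (0:ℝ) (Ioi 0)) (nhds I) := by
    rw [tendsto_iff_seq_tendsto]
    intro c hc
    have hc_mem : ∀ᶠ n in atTop, c n ∈ Ioi (0:ℝ) := hc.eventually eventually_mem_nhdsWithin
    set c' : ℕ → ℝ := fun n => if 0 < c n then c n else 1 with hc'def
    have hc'pos : ∀ n, 0 < c' n := by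
      intro n
      by_cases h : 0 < c n <;> simp [hc'def, h]
    have hcc' : ∀ᶠ n in atTop, c n = c' n := by
      filter_upwards [hc_mem] with n hn
      exact (if_pos (mem_Ioi.mp hn)).symm
    have hc'0 : Tendsto c' atTop (nhds (0:ℝ)) :=
      ((hc.mono_right nhdsWithin_le_nhds).congr' hcc')
    -- the dominating function
    set U : Set (X × ℝ) := ⋃ n, Aset (c' n) with hU
    have hUmeas : MeasurableSet U := MeasurableSet.iUnion fun n => hAset _
    set B : X → ℝ≥0∞ := fun x => ν (Prod.mk x ⁻¹' U) with hB
    have hBmeas : Measurable B := measurable_measure_prodMk_left hUmeas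
    have hBle : ∀ x, B x ≤ ENNReal.ofReal (1 / |γ|) * (TstarFn T x) ^ p := by
      intro x
      have hsub : Prod.mk x ⁻¹' U ⊆
          {s : ℝ | 0 < s ∧ ENNReal.ofReal (s ^ (γ / p)) < TstarFn T x} := by
        intro s hs
        simp only [hU, preimage_iUnion, mem_iUnion] at hs
        obtain ⟨n, hn⟩ := hs
        have hn' : 0 < s ∧ s ^ (γ / p) < |T (c' n * s) x| := hn
        refine ⟨hn'.1, ?_⟩
        calc ENNReal.ofReal (s ^ (γ / p)) < ENNReal.ofReal |T (c' n * s) x| := by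
              rw [ENNReal.ofReal_lt_ofReal_iff
                (lt_of_le_of_lt (Real.rpow_nonneg hn'.1.le _) hn'.2)]
              exact hn'.2
          _ ≤ TstarFn T x := by
              refine le_iSup_of_le (c' n * s) ?_
              exact le_iSup_of_le (mul_pos (hc'pos n) hn'.1) le_rfl
      refine le_trans (measure_mono hsub) ?_
      by_cases hx : TstarFn T x = ∞
      · rw [hx, ENNReal.top_rpow_of_pos hp0, ENNReal.mul_top (by
          simp only [ne_eq, ENNReal.ofReal_eq_zero, not_le]
          positivity)]
        exact le_top
      · set b := (TstarFn T x).toReal with hbdef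
        have hb0 : 0 ≤ b := ENNReal.toReal_nonneg
        have hxb : TstarFn T x = ENNReal.ofReal b := (ENNReal.ofReal_toReal hx).symm
        have hsetb : {s : ℝ | 0 < s ∧ ENNReal.ofReal (s ^ (γ / p)) < TstarFn T x}
            = {s : ℝ | 0 < s ∧ s ^ (γ / p) < b} := by
          ext s
          simp only [mem_setOf_eq]
          refine and_congr_right fun hs => ?_
          rw [hxb, ENNReal.ofReal_lt_ofReal_iff_of_nonneg (Real.rpow_nonneg hs.le _)]
        refine le_of_eq ?_
        rw [hsetb, hν, wGamma_ball hp0 hγ hb0, hxb,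
          ENNReal.ofReal_rpow_of_nonneg hb0 hp0.le,
          ← ENNReal.ofReal_mul (by positivity), one_div_mul_eq_div]
    have h_fin : ∫⁻ x, B x ∂m ≠ ∞ := by
      have hle : ∫⁻ x, B x ∂m
          ≤ ENNReal.ofReal (1 / |γ|) * ∫⁻ x, (TstarFn T x) ^ p ∂m := by
        calc ∫⁻ x, B x ∂m
            ≤ ∫⁻ x, ENNReal.ofReal (1 / |γ|) * (TstarFn T x) ^ p ∂m := lintegral_mono hBle
          _ = ENNReal.ofReal (1 / |γ|) * ∫⁻ x, (TstarFn T x) ^ p ∂m :=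
              lintegral_const_mul' _ _ ENNReal.ofReal_ne_top
      exact ne_top_of_le_ne_top (ENNReal.mul_ne_top ENNReal.ofReal_ne_top hmax) hle
    have hBae : ∀ᵐ x ∂m, B x < ∞ := ae_lt_top hBmeas h_fin
    -- pointwise (in x) convergence
    have h_lim : ∀ᵐ x ∂m, Tendsto (fun n => ν (Prod.mk x ⁻¹' Aset (c' n))) atTop
        (nhds (ENNReal.ofReal (|g' x| ^ p / |γ|))) := by
      filter_upwards [hlim', hBae] with x hx hBx
      -- inner dominated convergence over ν
      have hslicemeas : ∀ n, MeasurableSet (Prod.mk x ⁻¹' Aset (c' n)) :=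
        fun n => measurable_prodMk_left (hAset (c' n))
      have hUslice : MeasurableSet (Prod.mk x ⁻¹' U) := measurable_prodMk_left hUmeas
      have hgset : MeasurableSet {s : ℝ | 0 < s ∧ s ^ (γ / p) < |g' x|} := by
        apply MeasurableSet.inter
        · exact measurableSet_Ioi
        · exact measurableSet_lt (measurable_id.pow measurable_const) measurable_const
      have hval : ν {s : ℝ | 0 < s ∧ s ^ (γ / p) < |g' x|}
          = ENNReal.ofReal (|g' x| ^ p / |γ|) := wGamma_ball hp0 hγ (abs_nonneg _)
      have hconv : ∀ᵐ s ∂ν, Tendsto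
          (fun n => (Prod.mk x ⁻¹' Aset (c' n)).indicator (1 : ℝ → ℝ≥0∞) s) atTop
          (nhds (({s : ℝ | 0 < s ∧ s ^ (γ / p) < |g' x|}).indicator (1 : ℝ → ℝ≥0∞) s)) := by
        have hN : ν {s : ℝ | 0 < s ∧ s ^ (γ / p) = |g' x|} = 0 := by
          by_cases hgx : |g' x| = 0
          · have : {s : ℝ | 0 < s ∧ s ^ (γ / p) = |g' x|} = ∅ := by
              ext s
              simp only [mem_setOf_eq, mem_empty_iff_false, iff_false, not_and]
              intro hs heq
              rw [hgx] at heq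
              exact absurd heq (Real.rpow_pos_of_pos hs _).ne'
            rw [this]
            exact measure_empty
          · refine measure_mono_null (fun s hs => ?_) (wGamma_singleton γ (|g' x| ^ (p / γ)))
            obtain ⟨hs, heq⟩ := hs
            have : s = (s ^ (γ / p)) ^ (p / γ) := by
              rw [← Real.rpow_mul hs.le, show γ / p * (p / γ) = 1 by field_simp,
                Real.rpow_one]
            rw [mem_singleton_iff, this, heq]
        have hae : ∀ᵐ s ∂ν, s ∉ {s : ℝ | 0 < s ∧ s ^ (γ / p) = |g' x|} :=
          measure_eq_zero_iff_ae_notMem.mp hN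
        filter_upwards [hae] with s hsN
        by_cases hs : 0 < s
        · have hts : Tendsto (fun n => c' n * s) atTop (nhdsWithin 0 (Ioi 0)) := by
            apply tendsto_nhdsWithin_of_tendsto_nhds_of_eventually_within
            · have := hc'0.mul_const s
              rwa [zero_mul] at this
            · exact Eventually.of_forall fun n => mul_pos (hc'pos n) hs
          have habs : Tendsto (fun n => |T (c' n * s) x|) atTop (nhds |g' x|) :=
            (hx.comp hts).abs
          by_cases hcomp : s ^ (γ / p) < |g' x|
          · have hev : ∀ᶠ n in atTop, s ^ (γ / p) < |T (c' n * s) x| :=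
              habs.eventually_const_lt hcomp
            refine Tendsto.congr' ?_ tendsto_const_nhds
            filter_upwards [hev] with n hn
            show {s : ℝ | 0 < s ∧ s ^ (γ / p) < |g' x|}.indicator
              (1 : ℝ → ℝ≥0∞) s = (Prod.mk x ⁻¹' Aset (c' n)).indicator (1 : ℝ → ℝ≥0∞) s
            rw [indicator_of_mem (show s ∈ Prod.mk x ⁻¹' Aset (c' n) from ⟨hs, hn⟩),
              indicator_of_mem (show s ∈ {s : ℝ | 0 < s ∧ s ^ (γ / p) < |g' x|}
                from ⟨hs, hcomp⟩)]
          · have hgt : |g' x| < s ^ (γ / p) :=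
              lt_of_le_of_ne (not_lt.mp hcomp) fun h => hsN ⟨hs, h.symm⟩
            have hev : ∀ᶠ n in atTop, |T (c' n * s) x| < s ^ (γ / p) :=
              habs.eventually_lt_const hgt
            refine Tendsto.congr' ?_ tendsto_const_nhds
            filter_upwards [hev] with n hn
            show {s : ℝ | 0 < s ∧ s ^ (γ / p) < |g' x|}.indicator
              (1 : ℝ → ℝ≥0∞) s = (Prod.mk x ⁻¹' Aset (c' n)).indicator (1 : ℝ → ℝ≥0∞) s
            rw [indicator_of_notMem (fun hmem => absurd
                (hmem : s ∈ Prod.mk x ⁻¹' Aset (c' n)).2 (not_lt.mpr hn.le)),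
              indicator_of_notMem (fun hmem => hcomp
                (hmem : s ∈ {s : ℝ | 0 < s ∧ s ^ (γ / p) < |g' x|}).2)]
        · refine Tendsto.congr' ?_ tendsto_const_nhds
          refine Eventually.of_forall fun n => ?_
          show {s : ℝ | 0 < s ∧ s ^ (γ / p) < |g' x|}.indicator
            (1 : ℝ → ℝ≥0∞) s = (Prod.mk x ⁻¹' Aset (c' n)).indicator (1 : ℝ → ℝ≥0∞) s
          rw [indicator_of_notMem (fun hmem => hs
              (hmem : s ∈ Prod.mk x ⁻¹' Aset (c' n)).1),
            indicator_of_notMem (fun hmem => hs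
              (hmem : s ∈ {s : ℝ | 0 < s ∧ s ^ (γ / p) < |g' x|}).1)]
      have hDCT := tendsto_lintegral_of_dominated_convergence (μ := ν)
        ((Prod.mk x ⁻¹' U).indicator (1 : ℝ → ℝ≥0∞))
        (fun n => measurable_one.indicator (hslicemeas n))
        (fun n => ae_of_all _ fun s =>
          indicator_le_indicator_of_subset
            (preimage_mono (subset_iUnion (fun k => Aset (c' k)) n))
            (fun _ => zero_le) s)
        (by rwa [lintegral_indicator_one hUslice, ← lt_top_iff_ne_top]) hconv
      rw [← hval, ← lintegral_indicator_one hgset]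
      have heq : (fun n => ∫⁻ s, (Prod.mk x ⁻¹' Aset (c' n)).indicator (1 : ℝ → ℝ≥0∞) s ∂ν)
          = fun n => ν (Prod.mk x ⁻¹' Aset (c' n)) :=
        funext fun n => lintegral_indicator_one (hslicemeas n)
      rw [heq] at hDCT
      exact hDCT
    -- outer dominated convergence
    have main : Tendsto (fun n => Φ (c' n)) atTop (nhds I) := by
      have Ieq : ∫⁻ x, ENNReal.ofReal (|g' x| ^ p / |γ|) ∂m = I := by
        have hpt : ∀ x, ENNReal.ofReal (|g' x| ^ p / |γ|)
            = ENNReal.ofReal (1 / |γ|) * ENNReal.ofReal (|g' x| ^ p) := by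
          intro x
          rw [← ENNReal.ofReal_mul (by positivity), one_div_mul_eq_div]
        simp only [hpt]
        rw [lintegral_const_mul' _ _ ENNReal.ofReal_ne_top, hI]
      rw [← Ieq]
      exact tendsto_lintegral_of_dominated_convergence B
        (fun n => measurable_measure_prodMk_left (hAset (c' n)))
        (fun n => ae_of_all _ fun x =>
          measure_mono (preimage_mono (subset_iUnion (fun n => Aset (c' n)) n)))
        h_fin h_lim
    refine main.congr' (hcc'.mono fun n hn => ?_)
    show Φ (c' n) = Φ (c n)
    exact congrArg Φ hn.symm
  refine (hD.comp hC).congr' (hfilter_pos.mono fun l hl => ?_)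
  exact (hkey l hl).symm
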